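/- arXiv:1206.0127 — 4 statements merged into one kernel-verified Lean document; each statement's English description precedes it below -/
import Mathlib

section
/- Let I be a compact interval in ℝ, f : I → I a continuous map, and x₀ ∈ I. Suppose that for every point c in the orbit {x₀, f(x₀), f²(x₀), …} of x₀ and every integer n ≥ 2, neither fⁿ(c) ≤ c < f(c) nor f(c) < c ≤ fⁿ(c) holds. Then x₀ is asymptotically periodic of period 1 or 2, i.e., there exists a point y ∈ I with f²(y) = y such that lim_{n→∞} |fⁿ(x₀) − fⁿ(y)| = 0. -/
open Filter Set Function

/-- `J` is a compact subinterval of `I`. -/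
def IsCompactSubinterval (J I : Set ℝ) : Prop :=
  J ⊆ I ∧ ∃ p q : ℝ, p ≤ q ∧ J = Set.Icc p q

/-- `g` is turbulent on the compact interval `J`: there are compact subintervals
`J₀`, `J₁` of `J` with at most one point in common with `g(J₀) ∩ g(J₁) ⊇ J₀ ∪ J₁`. -/
def TurbulentOn (g : ℝ → ℝ) (J : Set ℝ) : Prop :=
  ∃ J₀ J₁ : Set ℝ, IsCompactSubinterval J₀ J ∧ IsCompactSubinterval J₁ J ∧
    (J₀ ∩ J₁).Subsingleton ∧ J₀ ∪ J₁ ⊆ g '' J₀ ∩ g '' J₁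

/-- `g` is doubly turbulent on `I`: it is turbulent on two compact subintervals
of `I` having at most one point in common. -/
def DoublyTurbulentOn (g : ℝ → ℝ) (I : Set ℝ) : Prop :=
  ∃ K L : Set ℝ, IsCompactSubinterval K I ∧ IsCompactSubinterval L I ∧
    (K ∩ L).Subsingleton ∧ TurbulentOn g K ∧ TurbulentOn g L

/-- `y` is a periodic point of `f` of (least) period `m`. -/
def PeriodicPtOfPeriod (f : ℝ → ℝ) (m : ℕ) (y : ℝ) : Prop :=
  f^[m] y = y ∧ ∀ j : ℕ, 0 < j → j < m → f^[j] y ≠ y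

/-- `x` is a chain recurrent point of `f : I → I`. -/
def ChainRecurrentPt (f : ℝ → ℝ) (I : Set ℝ) (x : ℝ) : Prop :=
  x ∈ I ∧ ∀ ε : ℝ, 0 < ε → ∃ n : ℕ, 1 ≤ n ∧ ∃ xs : ℕ → ℝ,
    (∀ i ≤ n, xs i ∈ I) ∧ xs 0 = x ∧ xs n = x ∧ ∀ i < n, |f (xs i) - xs (i + 1)| < ε

/-- `z` belongs to the ω-limit set of `c` under `f`, i.e. `z` is a limit point of
the sequence `(f^[n] c)`. -/
def OmegaLimitPt (f : ℝ → ℝ) (c z : ℝ) : Prop :=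
  ∃ φ : ℕ → ℕ, StrictMono φ ∧ Filter.Tendsto (fun i => f^[φ i] c) Filter.atTop (nhds z)

/-- The sets `K` and `L` lie on opposite sides of the point `z`. -/
def OppositeSides (K L : Set ℝ) (z : ℝ) : Prop :=
  ((∀ x ∈ K, x < z) ∧ (∀ y ∈ L, z < y)) ∨ ((∀ x ∈ K, z < x) ∧ (∀ y ∈ L, y < z))


lemma exists_switch (Q : ℕ → Prop) : ∀ (m p : ℕ), p ≤ m → Q p → ¬ Q m →
    ∃ n, p ≤ n ∧ n < m ∧ Q n ∧ ¬ Q (n+1) := by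
  intro m
  induction m with
  | zero => intro p hp hQ hm; exact absurd (Nat.le_zero.mp hp ▸ hQ) hm
  | succ m ih =>
    intro p hp hQ hm
    rcases Nat.lt_or_ge p (m+1) with hlt | hge
    · by_cases hQm : Q m
      · exact ⟨m, Nat.lt_succ_iff.mp hlt, Nat.lt_succ_self m, hQm, hm⟩
      · obtain ⟨n, h1, h2, h3, h4⟩ := ih p (Nat.lt_succ_iff.mp hlt) hQ hQm
        exact ⟨n, h1, h2.trans (Nat.lt_succ_self m), h3, h4⟩
    · exact absurd ((Nat.le_antisymm hp hge) ▸ hQ) hm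

lemma asymp_of_tendsto' (a b : ℝ) (f : ℝ → ℝ) (hf : ContinuousOn f (Set.Icc a b))
    (x : ℕ → ℝ) (hxI : ∀ n, x n ∈ Set.Icc a b) (hstep : ∀ n, x (n+1) = f (x n)) (y : ℝ)
    (hy : Tendsto x atTop (nhds y)) :
    ∃ y ∈ Set.Icc a b, f^[2] y = y ∧
      Tendsto (fun n => |x n - f^[n] y|) atTop (nhds 0) := by
  have hyI : y ∈ Set.Icc a b := isClosed_Icc.mem_of_tendsto hy (Eventually.of_forall hxI)
  have hcw : ContinuousWithinAt f (Set.Icc a b) y := hf y hyI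
  have h1 : Tendsto (fun n => f (x n)) atTop (nhds (f y)) :=
    hcw.tendsto.comp (tendsto_nhdsWithin_iff.mpr ⟨hy, Eventually.of_forall hxI⟩)
  have h2 : Tendsto (fun n => f (x n)) atTop (nhds y) := by
    have := (tendsto_add_atTop_iff_nat 1).mpr hy
    refine this.congr (fun n => ?_)
    rw [hstep]
  have hfy : f y = y := tendsto_nhds_unique h1 h2
  refine ⟨y, hyI, by simp [Function.iterate_fixed hfy], ?_⟩
  have hh : Tendsto (fun n => |x n - y|) atTop (nhds 0) := by
    have := (hy.sub_const y).abs
    simpa using this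
  refine hh.congr (fun n => ?_)
  rw [Function.iterate_fixed hfy]

lemma main_aux (a b : ℝ) (f : ℝ → ℝ) (hf : ContinuousOn f (Set.Icc a b))
    (x : ℕ → ℝ) (hxI : ∀ n, x n ∈ Set.Icc a b) (hstep : ∀ n, x (n+1) = f (x n))
    (hgt : ∀ i j, i < j → x i < x (i+1) → x i < x j)
    (hlt : ∀ i j, i < j → x (i+1) < x i → x j < x i) :
    ∃ y ∈ Set.Icc a b, f^[2] y = y ∧
      Tendsto (fun n => |x n - f^[n] y|) atTop (nhds 0) := by
  classical
  by_cases hA : ∃ i, x (i+1) = x i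
  · obtain ⟨i, hi⟩ := hA
    have hconst : ∀ n, x (n + i) = x i := by
      intro n
      induction n with
      | zero => simp
      | succ n ih =>
        have : n + i + 1 = (n + i) + 1 := rfl
        rw [Nat.succ_add, hstep, ih, ← hstep, hi]
    have hy : Tendsto x atTop (nhds (x i)) := by
      rw [← tendsto_add_atTop_iff_nat i]
      exact tendsto_const_nhds.congr (fun n => (hconst n).symm)
    exact asymp_of_tendsto' a b f hf x hxI hstep (x i) hy
  push_neg at hA
  have htri : ∀ n, x n < x (n+1) ∨ x (n+1) < x n := fun n => ((hA n).lt_or_gt).symm.imp_left id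
  by_cases hB1 : ∃ N, ∀ n ≥ N, x n < x (n+1)
  · obtain ⟨N, hN⟩ := hB1
    have hmono : Monotone (fun n => x (n + N)) := by
      apply monotone_nat_of_le_succ
      intro n
      have := (hN (n + N) (Nat.le_add_left N n)).le
      simpa [Nat.add_right_comm] using this
    have hbdd : BddAbove (Set.range (fun n => x (n + N))) := by
      refine ⟨b, ?_⟩; rintro _ ⟨n, rfl⟩; exact (hxI _).2
    have hy := tendsto_atTop_ciSup hmono hbdd
    exact asymp_of_tendsto' a b f hf x hxI hstep _ ((tendsto_add_atTop_iff_nat N).mp hy)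
  by_cases hB2 : ∃ N, ∀ n ≥ N, x (n+1) < x n
  · obtain ⟨N, hN⟩ := hB2
    have hmono : Antitone (fun n => x (n + N)) := by
      apply antitone_nat_of_succ_le
      intro n
      have := (hN (n + N) (Nat.le_add_left N n)).le
      simpa [Nat.add_right_comm] using this
    have hbdd : BddBelow (Set.range (fun n => x (n + N))) := by
      refine ⟨a, ?_⟩; rintro _ ⟨n, rfl⟩; exact (hxI _).1
    have hy := tendsto_atTop_ciInf hmono hbdd
    exact asymp_of_tendsto' a b f hf x hxI hstep _ ((tendsto_add_atTop_iff_nat N).mp hy)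
  push_neg at hB1 hB2
  have hMinf : ∀ N, ∃ n, N ≤ n ∧ x (n+1) < x n := by
    intro N
    obtain ⟨n, hn, hn2⟩ := hB1 N
    exact ⟨n, hn, (htri n).resolve_left (not_lt.mpr hn2)⟩
  have hPinf : ∀ N, ∃ n, N ≤ n ∧ x n < x (n+1) := by
    intro N
    obtain ⟨n, hn, hn2⟩ := hB2 N
    exact ⟨n, hn, (htri n).resolve_right (not_lt.mpr hn2)⟩
  -- every plus value is below every minus value
  have hPM : ∀ i j, x i < x (i+1) → x (j+1) < x j → x i < x j := by
    intro i j hi hj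
    rcases lt_trichotomy i j with hij | rfl | hij
    · exact hgt i j hij hi
    · exact absurd hj (lt_asymm hi)
    · exact hlt j i hij hj
  set SP : Set ℝ := x '' {n | x n < x (n+1)} with hSP
  set SM : Set ℝ := x '' {n | x (n+1) < x n} with hSM
  have hSPne : SP.Nonempty := by
    obtain ⟨n, _, hn⟩ := hPinf 0; exact ⟨x n, n, hn, rfl⟩
  have hSMne : SM.Nonempty := by
    obtain ⟨n, _, hn⟩ := hMinf 0; exact ⟨x n, n, hn, rfl⟩
  have hSPbdd : BddAbove SP := ⟨b, by rintro _ ⟨n, _, rfl⟩; exact (hxI n).2⟩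
  have hSMbdd : BddBelow SM := ⟨a, by rintro _ ⟨n, _, rfl⟩; exact (hxI n).1⟩
  set l : ℝ := sSup SP with hldef
  set u : ℝ := sInf SM with hudef
  have hle_l : ∀ i, x i < x (i+1) → x i ≤ l := fun i hi => le_csSup hSPbdd ⟨i, hi, rfl⟩
  have hu_le : ∀ j, x (j+1) < x j → u ≤ x j := fun j hj => csInf_le hSMbdd ⟨j, hj, rfl⟩
  have hlI : l ∈ Set.Icc a b := by
    constructor
    · obtain ⟨n, _, hPn⟩ := hPinf 0
      exact le_trans (hxI n).1 (hle_l n hPn)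
    · exact csSup_le hSPne (by rintro _ ⟨n, _, rfl⟩; exact (hxI n).2)
  have huI : u ∈ Set.Icc a b := by
    constructor
    · exact le_csInf hSMne (by rintro _ ⟨n, _, rfl⟩; exact (hxI n).1)
    · obtain ⟨n, _, hMn⟩ := hMinf 0
      exact le_trans (hu_le n hMn) (hxI n).2
  have hlu : l ≤ u := by
    apply le_csInf hSMne
    rintro _ ⟨j, hj, rfl⟩
    exact csSup_le hSPne (by rintro _ ⟨i, hi, rfl⟩; exact (hPM i j hi hj).le)
  -- plus values eventually near l, minus values eventually near u
  have hPl : ∀ ε : ℝ, 0 < ε → ∃ N, ∀ n, N ≤ n → x n < x (n+1) → l - ε < x n ∧ x n ≤ l := by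
    intro ε hε
    obtain ⟨v, hv, hvlt⟩ := exists_lt_of_lt_csSup hSPne (by linarith : l - ε < l)
    obtain ⟨i, hi, rfl⟩ := hv
    refine ⟨i + 1, fun n hn hPn => ⟨lt_trans hvlt (hgt i n (by omega) hi), hle_l n hPn⟩⟩
  have hMu : ∀ ε : ℝ, 0 < ε → ∃ N, ∀ n, N ≤ n → x (n+1) < x n → u ≤ x n ∧ x n < u + ε := by
    intro ε hε
    obtain ⟨v, hv, hvlt⟩ := exists_lt_of_csInf_lt hSMne (by linarith : u < u + ε)
    obtain ⟨j, hj, rfl⟩ := hv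
    refine ⟨j + 1, fun n hn hMn => ⟨hu_le n hMn, lt_trans (hlt j n (by omega) hj) hvlt⟩⟩
  -- transitions
  have htransPM : ∀ N, ∃ n, N ≤ n ∧ (x n < x (n+1)) ∧ (x (n+2) < x (n+1)) := by
    intro N
    obtain ⟨p, hp, hPp⟩ := hPinf N
    obtain ⟨m, hm, hMm⟩ := hMinf (p+1)
    obtain ⟨n, h1, h2, h3, h4⟩ := exists_switch (fun k => x k < x (k+1)) m p (by omega) hPp
      (fun h' => absurd hMm (lt_asymm h'))
    exact ⟨n, le_trans hp h1, h3, (htri (n+1)).resolve_left h4⟩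
  have htransMP : ∀ N, ∃ n, N ≤ n ∧ (x (n+1) < x n) ∧ (x (n+1) < x (n+2)) := by
    intro N
    obtain ⟨p, hp, hMp⟩ := hMinf N
    obtain ⟨m, hm, hPm⟩ := hPinf (p+1)
    obtain ⟨n, h1, h2, h3, h4⟩ := exists_switch (fun k => x (k+1) < x k) m p (by omega) hMp
      (fun h' => absurd hPm (lt_asymm h'))
    exact ⟨n, le_trans hp h1, h3, (htri (n+1)).resolve_right h4⟩
  -- f l = u
  have tendsto_plus : ∀ φ : ℕ → ℕ, (∀ k, k ≤ φ k) → (∀ k, x (φ k) < x (φ k + 1)) →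
      Tendsto (fun k => x (φ k)) atTop (nhds l) := by
    intro φ hφ hφP
    rw [Metric.tendsto_atTop]
    intro ε hε
    obtain ⟨N, hN⟩ := hPl ε hε
    refine ⟨N, fun k hk => ?_⟩
    obtain ⟨h1, h2⟩ := hN (φ k) (le_trans hk (hφ k)) (hφP k)
    rw [Real.dist_eq, abs_lt]
    constructor <;> linarith
  have tendsto_minus : ∀ φ : ℕ → ℕ, (∀ k, k ≤ φ k) → (∀ k, x (φ k + 1) < x (φ k)) →
      Tendsto (fun k => x (φ k)) atTop (nhds u) := by
    intro φ hφ hφM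
    rw [Metric.tendsto_atTop]
    intro ε hε
    obtain ⟨N, hN⟩ := hMu ε hε
    refine ⟨N, fun k hk => ?_⟩
    obtain ⟨h1, h2⟩ := hN (φ k) (le_trans hk (hφ k)) (hφM k)
    rw [Real.dist_eq, abs_lt]
    constructor <;> linarith
  have hcomp : ∀ z ∈ Set.Icc a b, ∀ w : ℕ → ℕ, Tendsto (fun k => x (w k)) atTop (nhds z) →
      Tendsto (fun k => x (w k + 1)) atTop (nhds (f z)) := by
    intro z hz w hw
    have h1 : Tendsto (fun k => f (x (w k))) atTop (nhds (f z)) :=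
      (hf z hz).tendsto.comp (tendsto_nhdsWithin_iff.mpr ⟨hw, Eventually.of_forall (fun k => hxI _)⟩)
    exact h1.congr (fun k => (hstep (w k)).symm)
  have hfl : f l = u := by
    choose φ hφ1 hφ2 hφ3 using htransPM
    have h1 := hcomp l hlI φ (tendsto_plus φ hφ1 hφ2)
    have h2 : Tendsto (fun k => x (φ k + 1)) atTop (nhds u) := by
      apply tendsto_minus (fun k => φ k + 1) (fun k => le_trans (hφ1 k) (Nat.le_succ _))
      intro k
      exact hφ3 k
    exact tendsto_nhds_unique h1 h2
  have hfu : f u = l := by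
    choose φ hφ1 hφ2 hφ3 using htransMP
    have h1 := hcomp u huI φ (tendsto_minus φ hφ1 hφ2)
    have h2 : Tendsto (fun k => x (φ k + 1)) atTop (nhds l) := by
      apply tendsto_plus (fun k => φ k + 1) (fun k => le_trans (hφ1 k) (Nat.le_succ _))
      intro k
      exact hφ3 k
    exact tendsto_nhds_unique h1 h2
  rcases eq_or_lt_of_le hlu with heq | hltu
  · -- l = u : the whole sequence converges to l
    have hy : Tendsto x atTop (nhds l) := by
      rw [Metric.tendsto_atTop]
      intro ε hε
      obtain ⟨N1, hN1⟩ := hPl ε hε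
      obtain ⟨N2, hN2⟩ := hMu ε hε
      refine ⟨max N1 N2, fun n hn => ?_⟩
      rcases htri n with hPn | hMn
      · obtain ⟨h1, h2⟩ := hN1 n (le_trans (le_max_left _ _) hn) hPn
        rw [Real.dist_eq, abs_lt]; constructor <;> linarith
      · obtain ⟨h1, h2⟩ := hN2 n (le_trans (le_max_right _ _) hn) hMn
        rw [Real.dist_eq, abs_lt]; constructor <;> [linarith; (rw [← heq] at h2; linarith)]
    exact asymp_of_tendsto' a b f hf x hxI hstep l hy
  · -- l < u : period-two behaviour
    set d : ℝ := (u - l) / 2 with hddef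
    have hd : 0 < d := by rw [hddef]; linarith
    obtain ⟨δ₁, hδ₁, hδ₁'⟩ := Metric.continuousWithinAt_iff.mp (hf l hlI) d hd
    obtain ⟨δ₂, hδ₂, hδ₂'⟩ := Metric.continuousWithinAt_iff.mp (hf u huI) d hd
    have hε₀ : 0 < min (min δ₁ δ₂) d := lt_min (lt_min hδ₁ hδ₂) hd
    obtain ⟨N1, hN1⟩ := hPl _ hε₀
    obtain ⟨N2, hN2⟩ := hMu _ hε₀
    set N₀ := max N1 N2 with hN₀def
    have hswapP : ∀ n, N₀ ≤ n → x n < x (n+1) → x (n+2) < x (n+1) := by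
      intro n hn hPn
      obtain ⟨h1, h2⟩ := hN1 n (le_trans (le_max_left _ _) hn) hPn
      have hdist : dist (x n) l < δ₁ := by
        rw [Real.dist_eq, abs_lt]
        have hm : min (min δ₁ δ₂) d ≤ δ₁ := le_trans (min_le_left _ _) (min_le_left _ _)
        constructor <;> linarith
      have hfd := hδ₁' (hxI n) hdist
      rw [hfl, ← hstep, Real.dist_eq, abs_lt] at hfd
      rcases htri (n+1) with hP1 | hM1
      · exfalso
        have hle := hle_l (n+1) hP1
        have := hfd.1
        linarith
      · exact hM1
    have hswapM : ∀ n, N₀ ≤ n → x (n+1) < x n → x (n+1) < x (n+2) := by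
      intro n hn hMn
      obtain ⟨h1, h2⟩ := hN2 n (le_trans (le_max_right _ _) hn) hMn
      have hdist : dist (x n) u < δ₂ := by
        rw [Real.dist_eq, abs_lt]
        have hm : min (min δ₁ δ₂) d ≤ δ₂ := le_trans (min_le_left _ _) (min_le_right _ _)
        constructor <;> linarith
      have hfd := hδ₂' (hxI n) hdist
      rw [hfu, ← hstep, Real.dist_eq, abs_lt] at hfd
      rcases htri (n+1) with hP1 | hM1
      · exact hP1
      · exfalso
        have hge := hu_le (n+1) hM1
        have := hfd.2
        linarith
    have hiter2 : ∀ n, (Even n → f^[n] l = l ∧ f^[n] u = u) ∧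
        (¬ Even n → f^[n] l = u ∧ f^[n] u = l) := by
      intro n
      induction n with
      | zero => simp
      | succ n ih =>
        constructor
        · intro hE
          have hO : ¬ Even n := Nat.even_add_one.mp hE
          obtain ⟨h1, h2⟩ := ih.2 hO
          exact ⟨by rw [Function.iterate_succ_apply', h1, hfu],
                 by rw [Function.iterate_succ_apply', h2, hfl]⟩
        · intro hO1
          have hE : Even n := not_not.mp (fun hO => hO1 (Nat.even_add_one.mpr hO))
          obtain ⟨h1, h2⟩ := ih.1 hE
          exact ⟨by rw [Function.iterate_succ_apply', h1, hfl],
                 by rw [Function.iterate_succ_apply', h2, hfu]⟩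
    set y : ℝ := if x N₀ < x (N₀+1) then (if Even N₀ then l else u)
        else (if Even N₀ then u else l) with hydef
    have hyI : y ∈ Set.Icc a b := by rw [hydef]; split_ifs <;> assumption
    have h2l : f^[2] l = l := by
      rw [show f^[2] l = f (f l) by rw [Function.iterate_succ_apply', Function.iterate_one], hfl, hfu]
    have h2u : f^[2] u = u := by
      rw [show f^[2] u = f (f u) by rw [Function.iterate_succ_apply', Function.iterate_one], hfu, hfl]
    have hy2 : f^[2] y = y := by rw [hydef]; split_ifs <;> assumption
    have hv0 : (x N₀ < x (N₀+1) → f^[N₀] y = l) ∧ (x (N₀+1) < x N₀ → f^[N₀] y = u) := by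
      constructor
      · intro hP
        rw [hydef, if_pos hP]
        by_cases hE : Even N₀
        · rw [if_pos hE]; exact ((hiter2 N₀).1 hE).1
        · rw [if_neg hE]; exact ((hiter2 N₀).2 hE).2
      · intro hM
        rw [hydef, if_neg (lt_asymm hM)]
        by_cases hE : Even N₀
        · rw [if_pos hE]; exact ((hiter2 N₀).1 hE).2
        · rw [if_neg hE]; exact ((hiter2 N₀).2 hE).1
    have hkey : ∀ m, (x (N₀+m) < x (N₀+m+1) → f^[N₀+m] y = l) ∧
        (x (N₀+m+1) < x (N₀+m) → f^[N₀+m] y = u) := by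
      intro m
      induction m with
      | zero => simpa using hv0
      | succ m ih =>
        have hn : N₀ ≤ N₀ + m := Nat.le_add_right _ _
        refine ⟨?_, ?_⟩
        · show x ((N₀+m)+1) < x ((N₀+m)+1+1) → f^[(N₀+m)+1] y = l
          intro hP1
          rcases htri (N₀+m) with hPn | hMn
          · exact absurd hP1 (lt_asymm (hswapP _ hn hPn))
          · rw [Function.iterate_succ_apply', ih.2 hMn, hfu]
        · show x ((N₀+m)+1+1) < x ((N₀+m)+1) → f^[(N₀+m)+1] y = u
          intro hM1
          rcases htri (N₀+m) with hPn | hMn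
          · rw [Function.iterate_succ_apply', ih.1 hPn, hfl]
          · exact absurd (hswapM _ hn hMn) (lt_asymm hM1)
    refine ⟨y, hyI, hy2, ?_⟩
    rw [Metric.tendsto_atTop]
    intro ε hε
    obtain ⟨M1, hM1⟩ := hPl ε hε
    obtain ⟨M2, hM2⟩ := hMu ε hε
    refine ⟨max N₀ (max M1 M2), fun n hn => ?_⟩
    have hn0 : N₀ ≤ n := le_trans (le_max_left _ _) hn
    have hrep : n = N₀ + (n - N₀) := by omega
    show dist |x n - f^[n] y| 0 < ε
    rcases htri n with hPn | hMn
    · have hval : f^[n] y = l := by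
        have hk := (hkey (n - N₀)).1
        rw [← hrep] at hk
        exact hk hPn
      obtain ⟨h1, h2⟩ := hM1 n (le_trans (le_trans (le_max_left _ _) (le_max_right _ _)) hn) hPn
      rw [hval, Real.dist_eq, sub_zero, abs_abs, abs_lt]
      constructor <;> linarith
    · have hval : f^[n] y = u := by
        have hk := (hkey (n - N₀)).2
        rw [← hrep] at hk
        exact hk hMn
      obtain ⟨h1, h2⟩ := hM2 n (le_trans (le_trans (le_max_right _ _) (le_max_right _ _)) hn) hMn
      rw [hval, Real.dist_eq, sub_zero, abs_abs, abs_lt]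
      constructor <;> linarith

/-- Theorem 1 (B), asymptotic periodicity. -/
theorem stmt_2 (a b : ℝ) (hab : a ≤ b) (f : ℝ → ℝ)
    (hf : ContinuousOn f (Set.Icc a b)) (hmaps : Set.MapsTo f (Set.Icc a b) (Set.Icc a b))
    (x₀ : ℝ) (hx₀ : x₀ ∈ Set.Icc a b)
    (h : ∀ i n : ℕ, 2 ≤ n →
      ¬(f^[n] (f^[i] x₀) ≤ f^[i] x₀ ∧ f^[i] x₀ < f (f^[i] x₀)) ∧
      ¬(f (f^[i] x₀) < f^[i] x₀ ∧ f^[i] x₀ ≤ f^[n] (f^[i] x₀))) :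
    ∃ y ∈ Set.Icc a b, f^[2] y = y ∧
      Filter.Tendsto (fun n => |f^[n] x₀ - f^[n] y|) Filter.atTop (nhds 0) := by
  have hxI : ∀ n, f^[n] x₀ ∈ Set.Icc a b := by
    intro n
    induction n with
    | zero => simpa using hx₀
    | succ n ih => rw [Function.iterate_succ_apply']; exact hmaps ih
  have hstep : ∀ n, f^[n+1] x₀ = f (f^[n] x₀) := fun n => Function.iterate_succ_apply' f n x₀
  have hgt : ∀ i j, i < j → f^[i] x₀ < f^[i+1] x₀ → f^[i] x₀ < f^[j] x₀ := by
    intro i j hij hi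
    rcases eq_or_lt_of_le (Nat.succ_le_of_lt hij) with he | h2
    · exact he ▸ hi
    · have h2' : 2 ≤ j - i := by omega
      have hni := (h i (j - i) h2').1
      have heq : f^[j - i] (f^[i] x₀) = f^[j] x₀ := by
        rw [← Function.iterate_add_apply]; congr 1; omega
      rw [heq] at hni
      push_neg at hni
      by_contra hcon
      push_neg at hcon
      rw [hstep i] at hi
      exact absurd hi (not_lt.mpr (hni hcon))
  have hlt : ∀ i j, i < j → f^[i+1] x₀ < f^[i] x₀ → f^[j] x₀ < f^[i] x₀ := by
    intro i j hij hi
    rcases eq_or_lt_of_le (Nat.succ_le_of_lt hij) with he | h2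
    · exact he ▸ hi
    · have h2' : 2 ≤ j - i := by omega
      have hni := (h i (j - i) h2').2
      have heq : f^[j - i] (f^[i] x₀) = f^[j] x₀ := by
        rw [← Function.iterate_add_apply]; congr 1; omega
      rw [heq] at hni
      push_neg at hni
      rw [hstep i] at hi
      exact hni hi
  exact main_aux a b f hf (fun n => f^[n] x₀) hxI hstep hgt hlt
end

section
/- Let I be a compact interval in ℝ and f : I → I a continuous map. If there exist a fixed point z of f and a point c ∈ I such that f(c) < c < z or z < c < f(c), then at least one of the following holds: (1) there exists a proper compact subinterval J of I such that c ∈ J, f(J) ⊊ J, and z ∉ J; or (2) f is turbulent on I and has periodic points of all periods m ≥ 1. -/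
open Filter Set Function

private lemma iter_cm (f : ℝ → ℝ) (s : Set ℝ) (hf : ContinuousOn f s) (hm : MapsTo f s s) :
    ∀ n : ℕ, ContinuousOn (f^[n]) s ∧ MapsTo (f^[n]) s s := by
  intro n
  induction n with
  | zero => simpa using ⟨continuousOn_id, mapsTo_id s⟩
  | succ n ih =>
    rw [Function.iterate_succ]
    exact ⟨ih.1.comp hf hm, ih.2.comp hm⟩

private lemma pull_aux1 (f : ℝ → ℝ) (u v r s : ℝ) (huv : u ≤ v)
    (hf : ContinuousOn f (Set.Icc u v)) (hrs : r ≤ s) (hu : f u = r) (hv : f v = s) :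
    ∃ p' q', u ≤ p' ∧ p' ≤ q' ∧ q' ≤ v ∧ f '' Set.Icc p' q' = Set.Icc r s := by
  set A := Set.Icc u v ∩ f ⁻¹' {s} with hA
  have hAc : IsClosed A := hf.preimage_isClosed_of_isClosed isClosed_Icc isClosed_singleton
  have hvA : v ∈ A := ⟨⟨huv, le_rfl⟩, hv⟩
  have hAb : BddBelow A := ⟨u, fun x hx => hx.1.1⟩
  set v' := sInf A with hv'
  have hv'A : v' ∈ A := hAc.csInf_mem ⟨v, hvA⟩ hAb
  have hv'mem : v' ∈ Set.Icc u v := hv'A.1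
  have hfv' : f v' = s := hv'A.2
  set B := Set.Icc u v' ∩ f ⁻¹' {r} with hB
  have hBc : IsClosed B :=
    (hf.mono (Set.Icc_subset_Icc le_rfl hv'mem.2)).preimage_isClosed_of_isClosed
      isClosed_Icc isClosed_singleton
  have huB : u ∈ B := ⟨⟨le_rfl, hv'mem.1⟩, hu⟩
  have hBb : BddAbove B := ⟨v', fun x hx => hx.1.2⟩
  set u' := sSup B with hu'
  have hu'B : u' ∈ B := hBc.csSup_mem ⟨u, huB⟩ hBb
  have hu'mem : u' ∈ Set.Icc u v' := hu'B.1
  have hfu' : f u' = r := hu'B.2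
  have hzz : u' ≤ v' := hu'mem.2
  have hsubuv : Set.Icc u' v' ⊆ Set.Icc u v :=
    Set.Icc_subset_Icc hu'mem.1 hv'mem.2
  refine ⟨u', v', hu'mem.1, hzz, hv'mem.2, ?_⟩
  apply Set.Subset.antisymm
  · rintro y ⟨x, hx, rfl⟩
    constructor
    · by_contra hlt
      push_neg at hlt
      have hiv : r ∈ Set.Icc (f x) (f v') := ⟨hlt.le, hfv' ▸ hrs⟩
      obtain ⟨y', hy', hfy'⟩ := intermediate_value_Icc hx.2
        (hf.mono (Set.Icc_subset_Icc (hu'mem.1.trans hx.1) hv'mem.2)) hiv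
      have hy'B : y' ∈ B := ⟨⟨hu'mem.1.trans (hx.1.trans hy'.1), hy'.2⟩, hfy'⟩
      have h1 : y' ≤ u' := le_csSup hBb hy'B
      have h2 : x = u' := le_antisymm (hy'.1.trans h1) hx.1
      rw [h2, hfu'] at hlt; exact absurd hlt (lt_irrefl r)
    · by_contra hlt
      push_neg at hlt
      have hiv : s ∈ Set.Icc (f u') (f x) := ⟨hfu' ▸ hrs, hlt.le⟩
      obtain ⟨y', hy', hfy'⟩ := intermediate_value_Icc hx.1
        (hf.mono (Set.Icc_subset_Icc hu'mem.1 (hx.2.trans hv'mem.2))) hiv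
      have hy'A : y' ∈ A := ⟨⟨hu'mem.1.trans hy'.1, (hy'.2.trans hx.2).trans hv'mem.2⟩, hfy'⟩
      have h1 : v' ≤ y' := csInf_le hAb hy'A
      have h2 : x = v' := le_antisymm hx.2 (h1.trans hy'.2)
      rw [h2, hfv'] at hlt; exact absurd hlt (lt_irrefl s)
  · have := intermediate_value_Icc hzz (hf.mono hsubuv)
    rw [hfu', hfv'] at this; exact this

private lemma pull_aux2 (f : ℝ → ℝ) (u v r s : ℝ) (huv : u ≤ v)
    (hf : ContinuousOn f (Set.Icc u v)) (hrs : r ≤ s) (hu : f u = s) (hv : f v = r) :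
    ∃ p' q', u ≤ p' ∧ p' ≤ q' ∧ q' ≤ v ∧ f '' Set.Icc p' q' = Set.Icc r s := by
  set A := Set.Icc u v ∩ f ⁻¹' {r} with hA
  have hAc : IsClosed A := hf.preimage_isClosed_of_isClosed isClosed_Icc isClosed_singleton
  have hvA : v ∈ A := ⟨⟨huv, le_rfl⟩, hv⟩
  have hAb : BddBelow A := ⟨u, fun x hx => hx.1.1⟩
  set q' := sInf A with hq'
  have hq'A : q' ∈ A := hAc.csInf_mem ⟨v, hvA⟩ hAb
  have hq'mem : q' ∈ Set.Icc u v := hq'A.1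
  have hfq' : f q' = r := hq'A.2
  set B := Set.Icc u q' ∩ f ⁻¹' {s} with hB
  have hBc : IsClosed B :=
    (hf.mono (Set.Icc_subset_Icc le_rfl hq'mem.2)).preimage_isClosed_of_isClosed
      isClosed_Icc isClosed_singleton
  have huB : u ∈ B := ⟨⟨le_rfl, hq'mem.1⟩, hu⟩
  have hBb : BddAbove B := ⟨q', fun x hx => hx.1.2⟩
  set p' := sSup B with hp'
  have hp'B : p' ∈ B := hBc.csSup_mem ⟨u, huB⟩ hBb
  have hp'mem : p' ∈ Set.Icc u q' := hp'B.1
  have hfp' : f p' = s := hp'B.2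
  have hzz : p' ≤ q' := hp'mem.2
  have hsubuv : Set.Icc p' q' ⊆ Set.Icc u v := Set.Icc_subset_Icc hp'mem.1 hq'mem.2
  refine ⟨p', q', hp'mem.1, hzz, hq'mem.2, ?_⟩
  apply Set.Subset.antisymm
  · rintro y ⟨x, hx, rfl⟩
    constructor
    · by_contra hlt
      push_neg at hlt
      have hiv : r ∈ Set.Icc (f x) (f p') := ⟨hlt.le, hfp' ▸ hrs⟩
      obtain ⟨y', hy', hfy'⟩ := intermediate_value_Icc' hx.1
        (hf.mono (Set.Icc_subset_Icc hp'mem.1 (hx.2.trans hq'mem.2))) hiv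
      have hy'A : y' ∈ A := ⟨⟨hp'mem.1.trans hy'.1, (hy'.2.trans hx.2).trans hq'mem.2⟩, hfy'⟩
      have h1 : q' ≤ y' := csInf_le hAb hy'A
      have h2 : x = q' := le_antisymm hx.2 (h1.trans hy'.2)
      rw [h2, hfq'] at hlt; exact absurd hlt (lt_irrefl r)
    · by_contra hlt
      push_neg at hlt
      have hiv : s ∈ Set.Icc (f q') (f x) := ⟨hfq' ▸ hrs, hlt.le⟩
      obtain ⟨y', hy', hfy'⟩ := intermediate_value_Icc' hx.2
        (hf.mono (Set.Icc_subset_Icc (hp'mem.1.trans hx.1) hq'mem.2)) hiv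
      have hy'B : y' ∈ B := ⟨⟨hp'mem.1.trans (hx.1.trans hy'.1), hy'.2⟩, hfy'⟩
      have h1 : y' ≤ p' := le_csSup hBb hy'B
      have h2 : x = p' := le_antisymm (hy'.1.trans h1) hx.1
      rw [h2, hfp'] at hlt; exact absurd hlt (lt_irrefl s)
  · have := intermediate_value_Icc' hzz (hf.mono hsubuv)
    rw [hfq', hfp'] at this
            ; exact this

private lemma pullback (f : ℝ → ℝ) (p q r s : ℝ) (hpq : p ≤ q)
    (hf : ContinuousOn f (Set.Icc p q)) (hrs : r ≤ s) (hsub : Set.Icc r s ⊆ f '' Set.Icc p q) :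
    ∃ p' q', p ≤ p' ∧ p' ≤ q' ∧ q' ≤ q ∧ f '' Set.Icc p' q' = Set.Icc r s := by
  obtain ⟨u, hu, hur⟩ := hsub ⟨le_rfl, hrs⟩
  obtain ⟨v, hv, hvs⟩ := hsub ⟨hrs, le_rfl⟩
  rcases le_total u v with huv | hvu
  · obtain ⟨p', q', h1, h2, h3, h4⟩ := pull_aux1 f u v r s huv
      (hf.mono (Set.Icc_subset_Icc hu.1 hv.2)) hrs hur hvs
    exact ⟨p', q', hu.1.trans h1, h2, h3.trans hv.2, h4⟩
  · obtain ⟨p', q', h1, h2, h3, h4⟩ := pull_aux2 f v u r s hvu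
      (hf.mono (Set.Icc_subset_Icc hv.1 hu.2)) hrs hvs hur
    exact ⟨p', q', hv.1.trans h1, h2, h3.trans hu.2, h4⟩

private lemma fix_of_cover (f : ℝ → ℝ) (p q : ℝ) (hpq : p ≤ q)
    (hf : ContinuousOn f (Set.Icc p q)) (hc : Set.Icc p q ⊆ f '' Set.Icc p q) :
    ∃ x ∈ Set.Icc p q, f x = x := by
  obtain ⟨u, hu, hup⟩ := hc ⟨le_rfl, hpq⟩
  obtain ⟨v, hv, hvq⟩ := hc ⟨hpq, le_rfl⟩
  set g : ℝ → ℝ := fun x => f x - x with hg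
  have hsub : Set.uIcc u v ⊆ Set.Icc p q := Set.uIcc_subset_Icc hu hv
  have hgc : ContinuousOn g (Set.uIcc u v) := ((hf.mono hsub).sub continuousOn_id)
  have h0 : (0:ℝ) ∈ Set.uIcc (g u) (g v) := by
    apply Set.Icc_subset_uIcc
    constructor
    · simp only [hg]; rw [hup]; linarith [hu.1]
    · simp only [hg]; rw [hvq]; linarith [hv.2]
  obtain ⟨x, hx, hgx⟩ := intermediate_value_uIcc hgc h0
  refine ⟨x, hsub hx, ?_⟩
  have : f x - x = 0 := hgx
  linarith

private lemma cover_orbit (a b : ℝ) (f : ℝ → ℝ) (hf : ContinuousOn f (Set.Icc a b))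
    (hmaps : Set.MapsTo f (Set.Icc a b) (Set.Icc a b)) (m : ℕ) (P Q : ℕ → ℝ)
    (h1 : ∀ i, P i ≤ Q i) (h2 : ∀ i, Set.Icc (P i) (Q i) ⊆ Set.Icc a b)
    (h3 : ∀ i, Set.Icc (P (i+1)) (Q (i+1)) ⊆ f '' Set.Icc (P i) (Q i))
    (hP : P m = P 0) (hQ : Q m = Q 0) :
    ∃ y, f^[m] y = y ∧ ∀ i ≤ m, f^[i] y ∈ Set.Icc (P i) (Q i) := by
  have hne : (Set.Icc (P 0) (Q 0)).Nonempty := Set.nonempty_Icc.2 (h1 0)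
  have hab : a ≤ b := by
    obtain ⟨x, hx⟩ := hne; obtain ⟨h', h''⟩ := h2 0 hx; linarith
  have key : ∀ i : ℕ, ∃ cd : ℝ × ℝ, cd.1 ≤ cd.2 ∧ P 0 ≤ cd.1 ∧ cd.2 ≤ Q 0 ∧
      f^[i] '' Set.Icc cd.1 cd.2 = Set.Icc (P i) (Q i) ∧
      ∀ j ≤ i, f^[j] '' Set.Icc cd.1 cd.2 ⊆ Set.Icc (P j) (Q j) := by
    intro i
    induction i with
    | zero =>
      refine ⟨(P 0, Q 0), h1 0, le_rfl, le_rfl, by simp, ?_⟩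
      intro j hj
      interval_cases j
      simp
    | succ i ih =>
      obtain ⟨cd, hcd, hP0, hQ0, himg, hall⟩ := ih
      have hsubab : Set.Icc cd.1 cd.2 ⊆ Set.Icc a b :=
        fun x hx => h2 0 ⟨hP0.trans hx.1, hx.2.trans hQ0⟩
      have hcont : ContinuousOn (f^[i+1]) (Set.Icc cd.1 cd.2) :=
        (iter_cm f (Set.Icc a b) hf hmaps (i+1)).1.mono hsubab
      have himg' : Set.Icc (P (i+1)) (Q (i+1)) ⊆ f^[i+1] '' Set.Icc cd.1 cd.2 := by
        rw [Function.iterate_succ', Set.image_comp, himg]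
        exact h3 i
      obtain ⟨c', d', hc1, hc2, hc3, hc4⟩ :=
        pullback (f^[i+1]) cd.1 cd.2 (P (i+1)) (Q (i+1)) hcd hcont (h1 (i+1)) himg'
      refine ⟨(c', d'), hc2, hP0.trans hc1, hc3.trans hQ0, hc4, ?_⟩
      intro j hj
      rcases Nat.lt_or_ge j (i+1) with hji | hji
      · exact fun x hx => hall j (Nat.lt_succ_iff.mp hji)
          (Set.image_mono (Set.Icc_subset_Icc hc1 hc3) hx)
      · have : j = i + 1 := le_antisymm hj hji
        rw [this, hc4]
  obtain ⟨cd, hcd, hP0, hQ0, himg, hall⟩ := key m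
  have hsubab : Set.Icc cd.1 cd.2 ⊆ Set.Icc a b :=
    fun x hx => h2 0 ⟨hP0.trans hx.1, hx.2.trans hQ0⟩
  have hcover : Set.Icc cd.1 cd.2 ⊆ f^[m] '' Set.Icc cd.1 cd.2 := by
    rw [himg, hP, hQ]
    exact Set.Icc_subset_Icc hP0 hQ0
  obtain ⟨y, hy, hfy⟩ := fix_of_cover (f^[m]) cd.1 cd.2 hcd
    ((iter_cm f (Set.Icc a b) hf hmaps m).1.mono hsubab) hcover
  exact ⟨y, hfy, fun i hi => hall i hi (Set.mem_image_of_mem _ hy)⟩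

private lemma core (a b : ℝ) (hab : a ≤ b) (f : ℝ → ℝ)
    (hf : ContinuousOn f (Set.Icc a b)) (hmaps : Set.MapsTo f (Set.Icc a b) (Set.Icc a b))
    (z : ℝ) (hz : z ∈ Set.Icc a b) (hfz : f z = z)
    (c : ℝ) (hc : c ∈ Set.Icc a b) (h1 : f c < c) (h2 : c < z) :
    (∃ J : Set ℝ, IsCompactSubinterval J (Set.Icc a b) ∧ J ≠ Set.Icc a b ∧
        c ∈ J ∧ f '' J ⊂ J ∧ z ∉ J) ∨
    (TurbulentOn f (Set.Icc a b) ∧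
      ∀ m : ℕ, 1 ≤ m → ∃ y ∈ Set.Icc a b, PeriodicPtOfPeriod f m y) := by
  have hac : a ≤ c := hc.1
  have hcb : c ≤ b := hc.2
  have haz : a ≤ z := hz.1
  have hzb : z ≤ b := hz.2
  -- the least fixed point d in [c, z]
  set S := Set.Icc c z ∩ (fun x => f x - x) ⁻¹' {0} with hSdef
  have hScl : IsClosed S :=
    (((hf.mono (Set.Icc_subset_Icc hac hzb)).sub
      continuousOn_id)).preimage_isClosed_of_isClosed isClosed_Icc isClosed_singleton
  have hzS : z ∈ S := ⟨⟨h2.le, le_rfl⟩, by simp [hfz]⟩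
  have hSbd : BddBelow S := ⟨c, fun x hx => hx.1.1⟩
  set d := sInf S with hddef
  have hdS : d ∈ S := hScl.csInf_mem ⟨z, hzS⟩ hSbd
  have hfd : f d = d := by have := hdS.2; simp only [Set.mem_preimage, Set.mem_singleton_iff] at this; linarith
  have hcd : c ≤ d := hdS.1.1
  have hdz : d ≤ z := hdS.1.2
  have hdb : d ≤ b := hdz.trans hzb
  have hcd' : c < d := lt_of_le_of_ne hcd (fun he => by rw [← he] at hfd; linarith)
  have hIco : ∀ x, c ≤ x → x < d → f x < x := by
    intro x hx1 hx2
    by_contra hge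
    push_neg at hge
    have hxb : x ≤ b := by linarith
    have h0 : (0:ℝ) ∈ Set.Icc (f c - c) (f x - x) := ⟨by linarith, by linarith⟩
    obtain ⟨y, hy, hgy⟩ := intermediate_value_Icc hx1
      ((hf.mono (Set.Icc_subset_Icc hac hxb)).sub continuousOn_id) h0
    have hfy : f y = y := by have h' : f y - y = 0 := hgy; linarith
    have hyS : y ∈ S := ⟨⟨hy.1, by linarith [hy.2]⟩, by simp [hfy]⟩
    have := csInf_le hSbd hyS
    linarith [hy.2]
  -- the greatest fixed point e in [a, c)
  set E := Set.Icc a c ∩ (fun x => f x - x) ⁻¹' (Set.Ici 0) with hEdef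
  have hEcl : IsClosed E :=
    (((hf.mono (Set.Icc_subset_Icc le_rfl hcb)).sub
      continuousOn_id)).preimage_isClosed_of_isClosed isClosed_Icc isClosed_Ici
  have haE : a ∈ E := by
    refine ⟨⟨le_rfl, hac⟩, ?_⟩
    have := (hmaps ⟨le_rfl, hab⟩).1
    simp only [Set.mem_preimage, Set.mem_Ici]
    linarith
  have hEbd : BddAbove E := ⟨c, fun x hx => hx.1.2⟩
  set e := sSup E with hedef
  have heE : e ∈ E := hEcl.csSup_mem ⟨a, haE⟩ hEbd
  have hae : a ≤ e := heE.1.1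
  have hec : e ≤ c := heE.1.2
  have hfe_ge : e ≤ f e := by
    have := heE.2; simp only [Set.mem_preimage, Set.mem_Ici] at this; linarith
  have hec' : e < c := lt_of_le_of_ne hec (fun hh => by rw [hh] at hfe_ge; linarith)
  have hfe : f e = e := by
    by_contra hne
    have hgt : e < f e := lt_of_le_of_ne hfe_ge (Ne.symm hne)
    have h0 : (0:ℝ) ∈ Set.Icc (f c - c) (f e - e) := ⟨by linarith, by linarith⟩
    obtain ⟨y, hy, hgy⟩ := intermediate_value_Icc' hec
      ((hf.mono (Set.Icc_subset_Icc hae hcb)).sub continuousOn_id) h0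
    have hfy : f y = y := by have h' : f y - y = 0 := hgy; linarith
    have hyE : y ∈ E := ⟨⟨hae.trans hy.1, hy.2⟩, by simp [hfy]⟩
    have h3 := le_csSup hEbd hyE
    have : y = e := le_antisymm h3 hy.1
    rw [this] at hfy
    exact hne hfy
  have hed : ∀ x, e < x → x < d → f x < x := by
    intro x hx1 hx2
    rcases le_or_gt x c with hxc | hxc
    · by_contra hge
      push_neg at hge
      have : x ∈ E := ⟨⟨hae.trans hx1.le, hxc⟩, by simp only [Set.mem_preimage, Set.mem_Ici]; linarith⟩
      have := le_csSup hEbd this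
      linarith
    · exact hIco x hxc.le hx2
  -- main case split
  by_cases hP : ∃ x ∈ Set.Icc a c, d ≤ f x
  case neg =>
    -- Case I: no point of [a,c] maps above d
    push_neg at hP
    set v₀ := (c + d) / 2 with hv₀def
    have hv₀1 : c < v₀ := by simp only [hv₀def]; linarith
    have hv₀2 : v₀ < d := by simp only [hv₀def]; linarith
    have hv₀b : v₀ ≤ b := by linarith
    obtain ⟨η, hη, hmax⟩ := isCompact_Icc.exists_isMaxOn ⟨a, le_rfl, by linarith⟩
      (hf.mono (Set.Icc_subset_Icc le_rfl hv₀b))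
    have hmax' : ∀ x ∈ Set.Icc a v₀, f x ≤ f η := isMaxOn_iff.mp hmax
    have hVd : f η < d := by
      rcases le_or_gt η c with hηc | hηc
      · exact hP η ⟨hη.1, hηc⟩
      · have := hIco η hηc.le (lt_of_le_of_lt hη.2 hv₀2)
        linarith [hη.2]
    set v₁ := (max (f η) v₀ + d) / 2 with hv₁def
    have hWd : max (f η) v₀ < d := max_lt hVd hv₀2
    have hWv₁ : max (f η) v₀ < v₁ := by simp only [hv₁def]; linarith
    have hv₁d : v₁ < d := by simp only [hv₁def]; linarith
    have hcv₁ : c < v₁ := lt_of_lt_of_le hv₀1 ((le_max_right _ _).trans hWv₁.le)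
    have hv₁b : v₁ ≤ b := by linarith
    have hkey : ∀ x ∈ Set.Icc a v₁, f x < v₁ := by
      intro x hx
      rcases le_or_gt x v₀ with hxv | hxv
      · exact lt_of_le_of_lt (hmax' x ⟨hx.1, hxv⟩) (lt_of_le_of_lt (le_max_left _ _) hWv₁)
      · have := hIco x (by linarith) (lt_of_le_of_lt hx.2 hv₁d)
        linarith [hx.2]
    left
    refine ⟨Set.Icc a v₁, ⟨Set.Icc_subset_Icc le_rfl hv₁b, a, v₁, by linarith, rfl⟩, ?_, ⟨hac, hcv₁.le⟩, ?_, fun hzJ => by linarith [hzJ.2]⟩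
    · intro heq
      have : z ∈ Set.Icc a v₁ := heq ▸ hz
      linarith [this.2]
    · have hsub : f '' Set.Icc a v₁ ⊆ Set.Icc a v₁ := by
        rintro _ ⟨x, hx, rfl⟩
        exact ⟨(hmaps ⟨hx.1, hx.2.trans hv₁b⟩).1, (hkey x hx).le⟩
      refine (Set.ssubset_iff_subset_ne).2 ⟨hsub, fun heq => ?_⟩
      have hv₁J : v₁ ∈ Set.Icc a v₁ := ⟨by linarith, le_rfl⟩
      rw [← heq] at hv₁J
      obtain ⟨x, hx, hfx⟩ := hv₁J
      have := hkey x hx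
      linarith
  case pos =>
    -- Case II
    set Pset := Set.Icc a c ∩ f ⁻¹' (Set.Ici d) with hPsetdef
    have hPcl : IsClosed Pset :=
      (hf.mono (Set.Icc_subset_Icc le_rfl hcb)).preimage_isClosed_of_isClosed
        isClosed_Icc isClosed_Ici
    have hPne : Pset.Nonempty := by
      obtain ⟨x, hx1, hx2⟩ := hP; exact ⟨x, hx1, hx2⟩
    have hPbd : BddAbove Pset := ⟨c, fun x hx => hx.1.2⟩
    set ξ := sSup Pset with hξdef
    have hξP : ξ ∈ Pset := hPcl.csSup_mem hPne hPbd
    have hfξ : d ≤ f ξ := hξP.2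
    have haξ : a ≤ ξ := hξP.1.1
    have hξc : ξ ≤ c := hξP.1.2
    have hξc' : ξ < c := lt_of_le_of_ne hξc (fun hh => by rw [hh] at hfξ; linarith)
    have hξe : ξ < e := by
      have hξE : ξ ∈ E := ⟨hξP.1, by simp only [Set.mem_preimage, Set.mem_Ici]; linarith⟩
      have h3 := le_csSup hEbd hξE
      rcases lt_or_eq_of_le h3 with hlt | heq
      · exact hlt
      · rw [heq] at hfξ; rw [hfe] at hfξ; linarith
    have hltd : ∀ x, ξ < x → x < d → f x < d := by
      intro x hx1 hx2
      rcases le_or_gt x c with hxc | hxc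
      · by_contra hge
        push_neg at hge
        have : x ∈ Pset := ⟨⟨haξ.trans hx1.le, hxc⟩, hge⟩
        have := le_csSup hPbd this
        linarith
      · linarith [hIco x hxc.le hx2]
    by_cases hq : ∃ x, ξ < x ∧ x < d ∧ f x ≤ ξ
    case pos =>
      -- Case II.a : turbulence
      obtain ⟨q, hq1, hq2, hq3⟩ := hq
      have hqb : q ≤ b := by linarith
      have haq : a ≤ q := haξ.trans hq1.le
      have himg₀ : Set.Icc ξ d ⊆ f '' Set.Icc ξ q := by
        have h := intermediate_value_Icc' hq1.le (hf.mono (Set.Icc_subset_Icc haξ hqb))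
        exact fun x hx => h ⟨by linarith [hx.1], by linarith [hx.2]⟩
      have himg₁ : Set.Icc ξ d ⊆ f '' Set.Icc q d := by
        have h := intermediate_value_Icc hq2.le (hf.mono (Set.Icc_subset_Icc haq hdb))
        rw [hfd] at h
        exact fun x hx => h ⟨by linarith [hx.1], hx.2⟩
      right
      constructor
      · refine ⟨Set.Icc ξ q, Set.Icc q d,
          ⟨Set.Icc_subset_Icc haξ hqb, ξ, q, hq1.le, rfl⟩,
          ⟨Set.Icc_subset_Icc haq hdb, q, d, hq2.le, rfl⟩, ?_, ?_⟩
        · rw [Set.Icc_inter_Icc, max_eq_right hq1.le, min_eq_left hq2.le, Set.Icc_self]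
          exact Set.subsingleton_singleton
        · have hu : Set.Icc ξ q ∪ Set.Icc q d ⊆ Set.Icc ξ d :=
            Set.union_subset (Set.Icc_subset_Icc le_rfl hq2.le) (Set.Icc_subset_Icc hq1.le le_rfl)
          exact fun x hx => ⟨himg₀ (hu hx), himg₁ (hu hx)⟩
      · intro m hm
        rcases Nat.lt_or_ge m 2 with hm2 | hm2
        · have : m = 1 := by omega
          subst this
          exact ⟨z, hz, by simp [hfz], fun j hj1 hj2 => by omega⟩
        · set P' : ℕ → ℝ := fun i => if i % m = 0 then q else ξ with hP'def
          set Q' : ℕ → ℝ := fun i => if i % m = 0 then d else q with hQ'def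
          have hPQ1 : ∀ i, P' i ≤ Q' i := by
            intro i; simp only [hP'def, hQ'def]; split_ifs
            · exact hq2.le
            · exact hq1.le
          have hIccsub : ∀ i, Set.Icc (P' i) (Q' i) ⊆ Set.Icc ξ d := by
            intro i; simp only [hP'def, hQ'def]; split_ifs
            · exact Set.Icc_subset_Icc hq1.le le_rfl
            · exact Set.Icc_subset_Icc le_rfl hq2.le
          have hPQ2 : ∀ i, Set.Icc (P' i) (Q' i) ⊆ Set.Icc a b :=
            fun i => (hIccsub i).trans (Set.Icc_subset_Icc haξ hdb)
          have himgs : ∀ i, Set.Icc ξ d ⊆ f '' Set.Icc (P' i) (Q' i) := by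
            intro i; simp only [hP'def, hQ'def]; split_ifs
            · exact himg₁
            · exact himg₀
          have h3' : ∀ i, Set.Icc (P' (i+1)) (Q' (i+1)) ⊆ f '' Set.Icc (P' i) (Q' i) :=
            fun i => (hIccsub (i+1)).trans (himgs i)
          have hPm : P' m = P' 0 := by simp [hP'def, Nat.mod_self]
          have hQm : Q' m = Q' 0 := by simp [hQ'def, Nat.mod_self]
          obtain ⟨y, hym, hyit⟩ := cover_orbit a b f hf hmaps m P' Q' hPQ1 hPQ2 h3' hPm hQm
          have hy0 : y ∈ Set.Icc q d := by
            have h := hyit 0 (Nat.zero_le m)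
            simpa [hP'def, hQ'def] using h
          refine ⟨y, hPQ2 0 (by simpa [hP'def, hQ'def] using hy0), hym, ?_⟩
          intro j hj1 hj2 heq
          have hjmod : j % m = j := Nat.mod_eq_of_lt hj2
          have hjne : j ≠ 0 := by omega
          have hyJ₀ : y ∈ Set.Icc ξ q := by
            have h := hyit j hj2.le
            rw [heq] at h
            simpa [hP'def, hQ'def, hjmod, hjne] using h
          have hyq : y = q := le_antisymm hyJ₀.2 hy0.1
          have h1m : 1 % m = 1 := Nat.mod_eq_of_lt (by omega)
          have hfq : f q ∈ Set.Icc ξ q := by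
            have h := hyit 1 (by omega)
            simpa [hP'def, hQ'def, h1m, hyq] using h
          have hfqξ : f q = ξ := le_antisymm hq3 hfq.1
          rcases Nat.lt_or_ge m 3 with hm3 | hm3
          · have hj1' : j = 1 := by omega
            rw [hj1', Function.iterate_one, hyq] at heq
            rw [hfqξ] at heq
            linarith
          · have h2m : 2 % m = 2 := Nat.mod_eq_of_lt (by omega)
            have h := hyit 2 (by omega)
            simp only [hP'def, hQ'def, h2m, if_neg (two_ne_zero)] at h
            have h2y : f^[2] y = f ξ := by
              rw [hyq]
              show f^[2] q = f ξ
              rw [show (2:ℕ) = 1 + 1 from rfl, Function.iterate_succ_apply, Function.iterate_one, hfqξ]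
            rw [h2y] at h
            have := h.2
            linarith
    case neg =>
      -- Case II.b : invariant interval
      push_neg at hq
      left
      have hξd : ξ ≤ d := by linarith
      obtain ⟨xμ, hxμ, hminOn⟩ := isCompact_Icc.exists_isMinOn ⟨ξ, le_rfl, hξd⟩
        (hf.mono (Set.Icc_subset_Icc haξ hdb))
      have hmin' : ∀ x ∈ Set.Icc ξ d, f xμ ≤ f x := isMinOn_iff.mp hminOn
      have hμξ : ξ < f xμ := by
        rcases lt_or_eq_of_le hxμ.1 with hlt | heqx
        · rcases lt_or_eq_of_le hxμ.2 with hlt2 | heq2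
          · exact hq xμ hlt hlt2
          · rw [heq2, hfd]; linarith
        · rw [← heqx]; linarith
      set u := min (f xμ) e with hudef
      have hξu : ξ < u := lt_min hμξ hξe
      have hue : u ≤ e := min_le_right _ _
      have hau : a ≤ u := haξ.trans hξu.le
      have heb : e ≤ b := hec.trans hcb
      obtain ⟨xG, hxG, hmaxOn⟩ := isCompact_Icc.exists_isMaxOn ⟨e, hue, le_rfl⟩
        (hf.mono (Set.Icc_subset_Icc hau heb))
      have hmax' : ∀ x ∈ Set.Icc u e, f x ≤ f xG := isMaxOn_iff.mp hmaxOn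
      have hGd : f xG < d := hltd xG (lt_of_lt_of_le hξu hxG.1)
        (lt_of_le_of_lt hxG.2 (lt_trans hec' hcd'))
      set W := max (f xG) ((c + d) / 2) with hWdef
      have hWd : W < d := max_lt hGd (by linarith)
      set v := (W + d) / 2 with hvdef
      have hWv : W < v := by simp only [hvdef]; linarith
      have hvd : v < d := by simp only [hvdef]; linarith
      have hGv : f xG < v := lt_of_le_of_lt (le_max_left _ _) hWv
      have hcv : c < v := by
        have : (c + d) / 2 ≤ W := le_max_right _ _
        linarith
      have huv : u ≤ v := by linarith
      have hvb : v ≤ b := by linarith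
      have hkey : ∀ x ∈ Set.Icc u v, u ≤ f x ∧ f x < v := by
        intro x hx
        constructor
        · exact le_trans (min_le_left _ _) (hmin' x ⟨hξu.le.trans hx.1, hx.2.trans hvd.le⟩)
        · rcases le_or_gt x e with hxe | hxe
          · exact lt_of_le_of_lt (hmax' x ⟨hx.1, hxe⟩) hGv
          · have := hed x hxe (lt_of_le_of_lt hx.2 hvd)
            linarith [hx.2]
      refine ⟨Set.Icc u v, ⟨Set.Icc_subset_Icc hau hvb, u, v, huv, rfl⟩, ?_,
        ⟨by linarith, hcv.le⟩, ?_, fun hzJ => by linarith [hzJ.2]⟩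
      · intro heq
        have : z ∈ Set.Icc u v := heq ▸ hz
        linarith [this.2]
      · have hsub : f '' Set.Icc u v ⊆ Set.Icc u v := by
          rintro _ ⟨x, hx, rfl⟩
          exact ⟨(hkey x hx).1, (hkey x hx).2.le⟩
        refine (Set.ssubset_iff_subset_ne).2 ⟨hsub, fun heq => ?_⟩
        have hvJ : v ∈ Set.Icc u v := ⟨huv, le_rfl⟩
        rw [← heq] at hvJ
        obtain ⟨x, hx, hfx⟩ := hvJ
        have := (hkey x hx).2
        linarith

private lemma neg_iter (g : ℝ → ℝ) : ∀ (n : ℕ) (x : ℝ),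
    (fun t => -g (-t))^[n] x = -(g^[n] (-x)) := by
  intro n
  induction n with
  | zero => intro x; simp
  | succ n ih =>
    intro x
    rw [Function.iterate_succ_apply, ih, Function.iterate_succ_apply]
    simp

/-- Theorem 3. -/
theorem stmt_11 (a b : ℝ) (hab : a ≤ b) (f : ℝ → ℝ)
    (hf : ContinuousOn f (Set.Icc a b)) (hmaps : Set.MapsTo f (Set.Icc a b) (Set.Icc a b))
    (z : ℝ) (hz : z ∈ Set.Icc a b) (hfz : f z = z)
    (c : ℝ) (hc : c ∈ Set.Icc a b)
    (h : (f c < c ∧ c < z) ∨ (z < c ∧ c < f c)) :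
    (∃ J : Set ℝ, IsCompactSubinterval J (Set.Icc a b) ∧ J ≠ Set.Icc a b ∧
        c ∈ J ∧ f '' J ⊂ J ∧ z ∉ J) ∨
    (TurbulentOn f (Set.Icc a b) ∧
      ∀ m : ℕ, 1 ≤ m → ∃ y ∈ Set.Icc a b, PeriodicPtOfPeriod f m y) := by
  rcases h with ⟨h1, h2⟩ | ⟨h1, h2⟩
  · exact core a b hab f hf hmaps z hz hfz c hc h1 h2
  · -- conjugate by negation
    set g : ℝ → ℝ := fun y => -f (-y) with hg
    have hmemneg : ∀ x : ℝ, x ∈ Set.Icc (-b) (-a) → -x ∈ Set.Icc a b := by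
      intro x hx; exact ⟨by linarith [hx.2], by linarith [hx.1]⟩
    have hg_cont : ContinuousOn g (Set.Icc (-b) (-a)) := by
      apply ContinuousOn.neg
      exact hf.comp continuousOn_neg hmemneg
    have hg_maps : Set.MapsTo g (Set.Icc (-b) (-a)) (Set.Icc (-b) (-a)) := by
      intro x hx
      have h' := hmaps (hmemneg x hx)
      simp only [hg, Set.mem_Icc]
      exact ⟨by linarith [h'.2], by linarith [h'.1]⟩
    have hfeq : f = fun t => -g (-t) := by funext t; simp [hg]
    have hcore := core (-b) (-a) (by linarith) g hg_cont hg_maps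
      (-z) ⟨by linarith [hz.2], by linarith [hz.1]⟩ (by simp [hg, hfz])
      (-c) ⟨by linarith [hc.2], by linarith [hc.1]⟩
      (by simp only [hg, neg_neg]; linarith) (by linarith)
    rcases hcore with ⟨J', ⟨hJ'sub, p, q, hpq, hJ'eq⟩, hJ'ne, hcJ', hJ'img, hzJ'⟩ | ⟨hturb, hper⟩
    · left
      refine ⟨Neg.neg '' J', ⟨?_, -q, -p, by linarith, ?_⟩, ?_, ⟨-c, hcJ', neg_neg c⟩, ?_, ?_⟩
      · rintro _ ⟨x, hxJ, rfl⟩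
        exact hmemneg x (hJ'sub hxJ)
      · rw [hJ'eq, Set.image_neg_Icc]
      · intro heq
        apply hJ'ne
        have h2eq : Neg.neg '' (Neg.neg '' J') = J' := by
          ext x; simp
        rw [heq] at h2eq
        rw [← h2eq, Set.image_neg_Icc]
      · have hfim : f '' (Neg.neg '' J') = Neg.neg '' (g '' J') := by
          rw [← Set.image_comp, ← Set.image_comp]
          congr 1
          funext x
          simp [hg]
        rw [hfim]
        constructor
        · exact Set.image_mono hJ'img.1
        · intro hcon
          apply hJ'img.2
          intro x hx
          have : -x ∈ Neg.neg '' J' := ⟨x, hx, rfl⟩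
          obtain ⟨w, hw, hww⟩ := hcon this
          have : w = x := by linarith [neg_injective hww]
          rwa [← this]
      · rintro ⟨x, hx, hxz⟩
        apply hzJ'
        have : x = -z := by linarith [hxz]
        rwa [← this]
    · right
      constructor
      · obtain ⟨J₀, J₁, ⟨hs₀, p₀, q₀, hpq₀, heq₀⟩, ⟨hs₁, p₁, q₁, hpq₁, heq₁⟩, hss, hun⟩ := hturb
        refine ⟨Neg.neg '' J₀, Neg.neg '' J₁,
          ⟨fun x hx => by obtain ⟨w, hw, rfl⟩ := hx; exact hmemneg w (hs₀ hw),
            -q₀, -p₀, by linarith, by rw [heq₀, Set.image_neg_Icc]⟩,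
          ⟨fun x hx => by obtain ⟨w, hw, rfl⟩ := hx; exact hmemneg w (hs₁ hw),
            -q₁, -p₁, by linarith, by rw [heq₁, Set.image_neg_Icc]⟩, ?_, ?_⟩
        · intro x hx y hy
          obtain ⟨⟨w, hw, rfl⟩, ⟨w', hw', hw'e⟩⟩ := hx
          obtain ⟨⟨v, hv, rfl⟩, ⟨v', hv', hv'e⟩⟩ := hy
          have hww : w' = w := neg_injective hw'e
          have hvv : v' = v := neg_injective hv'e
          subst hww; subst hvv
          have := hss ⟨hw, hw'⟩ ⟨hv, hv'⟩
          rw [this]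
        · intro x hx
          have hnx : -x ∈ J₀ ∪ J₁ := by
            rcases hx with ⟨w, hw, rfl⟩ | ⟨w, hw, rfl⟩
            · left; simpa using hw
            · right; simpa using hw
          obtain ⟨⟨w0, hw0, hw0e⟩, ⟨w1, hw1, hw1e⟩⟩ := hun hnx
          constructor
          · refine ⟨-w0, ⟨w0, hw0, rfl⟩, ?_⟩
            have : g w0 = -x := hw0e
            simp only [hg] at this
            linarith
          · refine ⟨-w1, ⟨w1, hw1, rfl⟩, ?_⟩
            have : g w1 = -x := hw1e
            simp only [hg] at this
            linarith
      · intro m hm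
        obtain ⟨y, hy, hym, hyleast⟩ := hper m hm
        refine ⟨-y, hmemneg y hy, ?_, ?_⟩
        · rw [hfeq, neg_iter, neg_neg, hym]
        · intro j hj1 hj2 heq
          apply hyleast j hj1 hj2
          rw [hfeq, neg_iter, neg_neg] at heq
          linarith [heq]
end

section
/- Let I be a compact interval in ℝ and f : I → I a continuous map. If there exist a fixed point z of f, a point c ∈ I, and an integer n ≥ 2 such that f(c) < c < z ≤ fⁿ(c), or fⁿ(c) ≤ z < c < f(c), then f is turbulent on I and has periodic points of all periods m ≥ 1. -/
open Filter Set Function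

/- ===================== auxiliary lemmas ===================== -/

/-- Given `f α = r ≤ s = f β` with `α ≤ β`, there is a subinterval of `[α,β]`
whose image is exactly `[r,s]`. -/
lemma cover_exact_mono (f : ℝ → ℝ) {α β r s : ℝ} (hαβ : α ≤ β)
    (hcont : ContinuousOn f (Icc α β)) (hr : f α = r) (hs : f β = s) (hrs : r ≤ s) :
    ∃ u v, α ≤ u ∧ u ≤ v ∧ v ≤ β ∧ f '' Icc u v = Icc r s := by
  set A := {x | x ∈ Icc α β ∧ f x = s} with hA
  have hAc : IsClosed A := by
    have : A = Icc α β ∩ f ⁻¹' {s} := by ext x; simp [hA]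
    rw [this]
    exact hcont.preimage_isClosed_of_isClosed isClosed_Icc isClosed_singleton
  have hAne : A.Nonempty := ⟨β, ⟨hαβ, le_rfl⟩, hs⟩
  have hAbdd : BddBelow A := ⟨α, fun x hx => hx.1.1⟩
  set v := sInf A with hv
  have hvA : v ∈ A := hAc.csInf_mem hAne hAbdd
  have hva : α ≤ v := hvA.1.1
  have hvb : v ≤ β := hvA.1.2
  have hfv : f v = s := hvA.2
  set B := {x | x ∈ Icc α v ∧ f x = r} with hB
  have hBc : IsClosed B := by
    have : B = Icc α v ∩ f ⁻¹' {r} := by ext x; simp [hB]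
    rw [this]
    exact (hcont.mono (Icc_subset_Icc le_rfl hvb)).preimage_isClosed_of_isClosed
      isClosed_Icc isClosed_singleton
  have hBne : B.Nonempty := ⟨α, ⟨le_rfl, hva⟩, hr⟩
  have hBbdd : BddAbove B := ⟨v, fun x hx => hx.1.2⟩
  set u := sSup B with hu
  have huB : u ∈ B := hBc.csSup_mem hBne hBbdd
  have hua : α ≤ u := huB.1.1
  have huv : u ≤ v := huB.1.2
  have hfu : f u = r := huB.2
  refine ⟨u, v, hua, huv, hvb, Set.Subset.antisymm ?_ ?_⟩
  · rintro y ⟨x, hx, rfl⟩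
    constructor
    · by_contra hlt
      push_neg at hlt
      have hxv : x < v := by
        rcases lt_or_eq_of_le hx.2 with h | h
        · exact h
        · rw [h, hfv] at hlt; linarith
      have h0 : r ∈ Icc (f x) (f v) := ⟨hlt.le, by rw [hfv]; exact hrs⟩
      obtain ⟨ξ, hξ, hfξ⟩ := intermediate_value_Icc hxv.le
        (hcont.mono (Icc_subset_Icc (hua.trans hx.1) hvb)) h0
      have hxu : u < x := by
        rcases lt_or_eq_of_le hx.1 with h | h
        · exact h
        · rw [← h, hfu] at hlt; linarith
      have hmem : ξ ∈ B := ⟨⟨hua.trans (hxu.le.trans hξ.1), hξ.2⟩, hfξ⟩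
      have := le_csSup hBbdd hmem
      have : x ≤ u := hξ.1.trans this
      linarith
    · by_contra hgt
      push_neg at hgt
      have hxv : x < v := by
        rcases lt_or_eq_of_le hx.2 with h | h
        · exact h
        · rw [h, hfv] at hgt; linarith
      have h0 : s ∈ Icc (f u) (f x) := ⟨by rw [hfu]; exact hrs, hgt.le⟩
      obtain ⟨ξ, hξ, hfξ⟩ := intermediate_value_Icc hx.1
        (hcont.mono (Icc_subset_Icc hua (hx.2.trans hvb))) h0
      have hmem : ξ ∈ A := ⟨⟨hua.trans hξ.1, (hξ.2.trans hx.2).trans hvb⟩, hfξ⟩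
      have := csInf_le hAbdd hmem
      have : v ≤ x := this.trans hξ.2
      linarith
  · have := intermediate_value_Icc huv (hcont.mono (Icc_subset_Icc hua hvb))
    rw [hfu, hfv] at this
    exact this

/-- Given `f α = s ≥ r = f β` with `α ≤ β`, there is a subinterval of `[α,β]`
whose image is exactly `[r,s]`. -/
lemma cover_exact_anti (f : ℝ → ℝ) {α β r s : ℝ} (hαβ : α ≤ β)
    (hcont : ContinuousOn f (Icc α β)) (hs : f α = s) (hr : f β = r) (hrs : r ≤ s) :
    ∃ u v, α ≤ u ∧ u ≤ v ∧ v ≤ β ∧ f '' Icc u v = Icc r s := by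
  set A := {x | x ∈ Icc α β ∧ f x = s} with hA
  have hAc : IsClosed A := by
    have : A = Icc α β ∩ f ⁻¹' {s} := by ext x; simp [hA]
    rw [this]
    exact hcont.preimage_isClosed_of_isClosed isClosed_Icc isClosed_singleton
  have hAne : A.Nonempty := ⟨α, ⟨le_rfl, hαβ⟩, hs⟩
  have hAbdd : BddAbove A := ⟨β, fun x hx => hx.1.2⟩
  set u := sSup A with hu
  have huA : u ∈ A := hAc.csSup_mem hAne hAbdd
  have hua : α ≤ u := huA.1.1
  have hub : u ≤ β := huA.1.2
  have hfu : f u = s := huA.2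
  set B := {x | x ∈ Icc u β ∧ f x = r} with hB
  have hBc : IsClosed B := by
    have : B = Icc u β ∩ f ⁻¹' {r} := by ext x; simp [hB]
    rw [this]
    exact (hcont.mono (Icc_subset_Icc hua le_rfl)).preimage_isClosed_of_isClosed
      isClosed_Icc isClosed_singleton
  have hBne : B.Nonempty := ⟨β, ⟨hub, le_rfl⟩, hr⟩
  have hBbdd : BddBelow B := ⟨u, fun x hx => hx.1.1⟩
  set v := sInf B with hv
  have hvB : v ∈ B := hBc.csInf_mem hBne hBbdd
  have huv : u ≤ v := hvB.1.1
  have hvb : v ≤ β := hvB.1.2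
  have hfv : f v = r := hvB.2
  refine ⟨u, v, hua, huv, hvb, Set.Subset.antisymm ?_ ?_⟩
  · rintro y ⟨x, hx, rfl⟩
    constructor
    · by_contra hlt
      push_neg at hlt
      have hxv : x < v := by
        rcases lt_or_eq_of_le hx.2 with h | h
        · exact h
        · rw [h, hfv] at hlt; linarith
      have h0 : r ∈ Icc (f x) (f u) := ⟨hlt.le, by rw [hfu]; exact hrs⟩
      obtain ⟨ξ, hξ, hfξ⟩ := intermediate_value_Icc' hx.1
        (hcont.mono (Icc_subset_Icc hua (hx.2.trans hvb))) h0
      have hmem : ξ ∈ B := ⟨⟨hξ.1, (hξ.2.trans hx.2).trans hvb⟩, hfξ⟩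
      have := csInf_le hBbdd hmem
      have : v ≤ x := this.trans hξ.2
      linarith
    · by_contra hgt
      push_neg at hgt
      have hxu : u < x := by
        rcases lt_or_eq_of_le hx.1 with h | h
        · exact h
        · rw [← h, hfu] at hgt; linarith
      have h0 : s ∈ Icc (f v) (f x) := ⟨by rw [hfv]; exact hrs, hgt.le⟩
      obtain ⟨ξ, hξ, hfξ⟩ := intermediate_value_Icc' hx.2
        (hcont.mono (Icc_subset_Icc (hua.trans hx.1) hvb)) h0
      have hmem : ξ ∈ A := ⟨⟨hua.trans (hxu.le.trans hξ.1), hξ.2.trans hvb⟩, hfξ⟩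
      have := le_csSup hAbdd hmem
      have : x ≤ u := hξ.1.trans this
      linarith
  · have := intermediate_value_Icc' huv (hcont.mono (Icc_subset_Icc hua hvb))
    rw [hfu, hfv] at this
    exact this

/-- If `[r,s] ⊆ f([p,q])` then some subinterval of `[p,q]` has image exactly `[r,s]`. -/
lemma cover_sub (f : ℝ → ℝ) {p q r s : ℝ} (hpq : p ≤ q)
    (hcont : ContinuousOn f (Icc p q)) (hrs : r ≤ s) (hsub : Icc r s ⊆ f '' Icc p q) :
    ∃ u v, p ≤ u ∧ u ≤ v ∧ v ≤ q ∧ f '' Icc u v = Icc r s := by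
  obtain ⟨α, hα, hfα⟩ := hsub (left_mem_Icc.2 hrs)
  obtain ⟨β, hβ, hfβ⟩ := hsub (right_mem_Icc.2 hrs)
  rcases le_total α β with hab' | hab'
  · obtain ⟨u, v, h1, h2, h3, h4⟩ :=
      cover_exact_mono f hab' (hcont.mono (Icc_subset_Icc hα.1 hβ.2)) hfα hfβ hrs
    exact ⟨u, v, hα.1.trans h1, h2, h3.trans hβ.2, h4⟩
  · obtain ⟨u, v, h1, h2, h3, h4⟩ :=
      cover_exact_anti f hab' (hcont.mono (Icc_subset_Icc hβ.1 hα.2)) hfβ hfα hrs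
    exact ⟨u, v, hβ.1.trans h1, h2, h3.trans hα.2, h4⟩

/-- The main lemma: the case `f c < c < z ≤ fⁿ c`. -/
lemma main_case (a b : ℝ) (hab : a ≤ b) (f : ℝ → ℝ)
    (hf : ContinuousOn f (Set.Icc a b)) (hmaps : Set.MapsTo f (Set.Icc a b) (Set.Icc a b))
    (z : ℝ) (hz : z ∈ Set.Icc a b) (hfz : f z = z)
    (c : ℝ) (hc : c ∈ Set.Icc a b) (n : ℕ)
    (h1 : f c < c) (h2 : c < z) (h3 : z ≤ f^[n] c) :
    TurbulentOn f (Set.Icc a b) ∧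
      ∀ m : ℕ, 1 ≤ m → ∃ y ∈ Set.Icc a b, PeriodicPtOfPeriod f m y := by
  have horb : ∀ j, f^[j] c ∈ Icc a b := fun j => hmaps.iterate j hc
  have hitcont : ∀ j, ContinuousOn (f^[j]) (Icc a b) := by
    intro j
    induction j with
    | zero => simpa using continuousOn_id
    | succ j ih =>
      rw [Function.iterate_succ']
      exact hf.comp ih (hmaps.iterate j)
  -- the least fixed point above c
  set S := {x | x ∈ Icc c b ∧ f x = x} with hSdef
  have hSc : IsClosed S := by
    have : S = Icc c b ∩ (fun x => f x - x) ⁻¹' {0} := by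
      ext x; simp [hSdef, sub_eq_zero]
    rw [this]
    exact ((hf.mono (Icc_subset_Icc hc.1 le_rfl)).sub continuousOn_id).preimage_isClosed_of_isClosed
      isClosed_Icc isClosed_singleton
  have hSne : S.Nonempty := ⟨z, ⟨h2.le, hz.2⟩, hfz⟩
  have hSbdd : BddBelow S := ⟨c, fun x hx => hx.1.1⟩
  set z₀ := sInf S with hz₀def
  have hz₀S : z₀ ∈ S := hSc.csInf_mem hSne hSbdd
  have hfz₀ : f z₀ = z₀ := hz₀S.2
  have hcz₀ : c < z₀ := by
    rcases lt_or_eq_of_le hz₀S.1.1 with h | h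
    · exact h
    · rw [← h] at hfz₀; linarith
  have hz₀b : z₀ ≤ b := hz₀S.1.2
  have hz₀z : z₀ ≤ z := csInf_le hSbdd ⟨⟨h2.le, hz.2⟩, hfz⟩
  have hz₀a : a ≤ z₀ := hc.1.trans hcz₀.le
  -- f x < x on [c, z₀)
  have P1 : ∀ x, c ≤ x → x < z₀ → f x < x := by
    intro x hcx hxz
    by_contra hge
    push_neg at hge
    have hne : f x ≠ x := by
      intro hfx
      have : z₀ ≤ x := csInf_le hSbdd ⟨⟨hcx, hxz.le.trans hz₀b⟩, hfx⟩
      linarith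
    have hcont' : ContinuousOn (fun y => f y - y) (Icc c x) :=
      (hf.mono (Icc_subset_Icc hc.1 (hxz.le.trans hz₀b))).sub continuousOn_id
    have hlt : x < f x := lt_of_le_of_ne hge (Ne.symm hne)
    have h0 : (0:ℝ) ∈ Icc (f c - c) (f x - x) := ⟨by linarith, by linarith⟩
    obtain ⟨w, hw, hw0⟩ := intermediate_value_Icc hcx hcont' h0
    have hfw : f w = w := by have := sub_eq_zero.1 hw0; linarith
    have : z₀ ≤ w := csInf_le hSbdd ⟨⟨hw.1, hw.2.trans (hxz.le.trans hz₀b)⟩, hfw⟩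
    have : z₀ ≤ x := this.trans hw.2
    linarith
  -- first time the orbit climbs above z₀
  have hmset : ∃ j, z₀ ≤ f^[j] c := ⟨n, hz₀z.trans h3⟩
  set m := Nat.find hmset with hmdef
  have hmspec : z₀ ≤ f^[m] c := Nat.find_spec hmset
  have hmmin : ∀ j < m, f^[j] c < z₀ := fun j hj => not_le.1 (Nat.find_min hmset hj)
  have hm0 : m ≠ 0 := by
    intro h0
    rw [h0] at hmspec
    simp only [Function.iterate_zero, id_eq] at hmspec
    linarith
  have hm1 : m ≠ 1 := by
    intro h0
    rw [h0] at hmspec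
    simp only [Function.iterate_one] at hmspec
    linarith
  have hm2 : 2 ≤ m := by omega
  set d := f^[m-1] c with hddef
  have hdz₀ : d < z₀ := hmmin _ (by omega)
  have hfd : z₀ ≤ f d := by
    have hiter : f (f^[m-1] c) = f^[m] c := by
      rw [← Function.iterate_succ_apply' f (m-1) c]
      congr 1
      omega
    rw [hddef, hiter]
    exact hmspec
  have hdc : d < c := by
    by_contra hge
    push_neg at hge
    have := P1 d hge hdz₀
    linarith
  have hda : a ≤ d := (horb _).1
  -- last point in [a,c] mapping above z₀
  set T := {x | x ∈ Icc a c ∧ z₀ ≤ f x} with hTdef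
  have hTc : IsClosed T := by
    have : T = Icc a c ∩ f ⁻¹' (Ici z₀) := by ext x; simp [hTdef]
    rw [this]
    exact (hf.mono (Icc_subset_Icc le_rfl hc.2)).preimage_isClosed_of_isClosed
      isClosed_Icc isClosed_Ici
  have hTne : T.Nonempty := ⟨d, ⟨hda, hdc.le⟩, hfd⟩
  have hTbdd : BddAbove T := ⟨c, fun x hx => hx.1.2⟩
  set t := sSup T with htdef
  have htT : t ∈ T := hTc.csSup_mem hTne hTbdd
  have hta : a ≤ t := htT.1.1
  have hft : z₀ ≤ f t := htT.2
  have htc : t < c := by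
    rcases lt_or_eq_of_le htT.1.2 with h | h
    · exact h
    · exfalso; rw [h] at hft; linarith
  have hdt : d ≤ t := le_csSup hTbdd ⟨⟨hda, hdc.le⟩, hfd⟩
  -- first time the orbit drops to ≤ t
  have hkset : ∃ j, f^[j] c ≤ t := ⟨m - 1, hdt⟩
  set k := Nat.find hkset with hkdef
  have hkspec : f^[k] c ≤ t := Nat.find_spec hkset
  have hk0 : k ≠ 0 := by
    intro h0
    rw [h0] at hkspec
    simp only [Function.iterate_zero, id_eq] at hkspec
    linarith
  have hkm : k ≤ m - 1 := Nat.find_le hdt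
  set e := f^[k-1] c with hedef
  have hte : t < e := not_le.1 (Nat.find_min hkset (by omega))
  have hfe : f e ≤ t := by
    have hiter : f (f^[k-1] c) = f^[k] c := by
      rw [← Function.iterate_succ_apply' f (k-1) c]
      congr 1
      omega
    rw [hedef, hiter]
    exact hkspec
  have hez₀ : e < z₀ := hmmin (k-1) (by omega)
  have heb : e ≤ b := hez₀.le.trans hz₀b
  have hea : a ≤ e := hta.trans hte.le
  -- the two covering relations
  have hcov₀ : Icc t z₀ ⊆ f '' Icc t e := by
    intro y hy
    have := intermediate_value_Icc' hte.le (hf.mono (Icc_subset_Icc hta heb))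
    exact this ⟨hfe.trans hy.1, hy.2.trans hft⟩
  have hcov₁ : Icc t z₀ ⊆ f '' Icc e z₀ := by
    intro y hy
    have := intermediate_value_Icc hez₀.le (hf.mono (Icc_subset_Icc hea hz₀b))
    exact this ⟨hfe.trans hy.1, by rw [hfz₀]; exact hy.2⟩
  constructor
  · -- Turbulence
    refine ⟨Icc t e, Icc e z₀,
      ⟨Icc_subset_Icc hta heb, t, e, hte.le, rfl⟩,
      ⟨Icc_subset_Icc hea hz₀b, e, z₀, hez₀.le, rfl⟩, ?_, ?_⟩
    · rw [Icc_inter_Icc, max_eq_right hte.le, min_eq_left hez₀.le, Icc_self]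
      exact subsingleton_singleton
    · intro x hx
      have hx' : x ∈ Icc t z₀ := by
        rcases hx with hx | hx
        · exact ⟨hx.1, hx.2.trans hez₀.le⟩
        · exact ⟨hte.le.trans hx.1, hx.2⟩
      exact ⟨hcov₀ hx', hcov₁ hx'⟩
  · -- Periodic points of all periods
    intro M hM
    rcases eq_or_lt_of_le hM with hM1 | hM2
    · refine ⟨z₀, ⟨hz₀a, hz₀b⟩, ?_, ?_⟩
      · rw [← hM1]; simpa using hfz₀
      · intro j hj0 hjM; omega
    · obtain ⟨M₀, rfl⟩ : ∃ M₀, M = M₀ + 2 := ⟨M - 2, by omega⟩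
      have claim : ∀ j : ℕ, ∃ p q, e ≤ p ∧ p ≤ q ∧ q ≤ z₀ ∧
          f^[j+1] '' Icc p q = Icc t e ∧ ∀ i ≤ j, f^[i] '' Icc p q ⊆ Icc e z₀ := by
        intro j
        induction j with
        | zero =>
          obtain ⟨u, v, h1', h2', h3', h4'⟩ :=
            cover_sub f hez₀.le (hf.mono (Icc_subset_Icc hea hz₀b)) hte.le
              (fun y hy => hcov₁ ⟨hy.1, hy.2.trans hez₀.le⟩)
          refine ⟨u, v, h1', h2', h3', by simpa using h4', ?_⟩
          intro i hi
          interval_cases i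
          simpa using Icc_subset_Icc h1' h3'
        | succ j ih =>
          obtain ⟨p, q, hep, hpq, hqz, hiter, hint⟩ := ih
          obtain ⟨u, v, hu, huv, hv, himg⟩ :=
            cover_sub f hez₀.le (hf.mono (Icc_subset_Icc hea hz₀b)) hpq
              (fun y hy => hcov₁ ⟨hte.le.trans (hep.trans hy.1), hy.2.trans hqz⟩)
          refine ⟨u, v, hu, huv, hv, ?_, ?_⟩
          · rw [show j+1+1 = (j+1)+1 from rfl, Function.iterate_succ, Set.image_comp, himg, hiter]
          · intro i hi
            cases i with
            | zero => simpa using Icc_subset_Icc hu hv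
            | succ i' =>
              rw [Function.iterate_succ, Set.image_comp, himg]
              exact hint i' (by omega)
      obtain ⟨p, q, hep, hpq, hqz, hiter, hint⟩ := claim M₀
      obtain ⟨u, v, htu, huv, hve, himg⟩ :=
        cover_sub f hte.le (hf.mono (Icc_subset_Icc hta heb)) hpq
          (fun y hy => hcov₀ ⟨hte.le.trans (hep.trans hy.1), hy.2.trans hqz⟩)
      have hKab : Icc u v ⊆ Icc a b := Icc_subset_Icc (hta.trans htu) (hve.trans heb)
      have hfull : f^[M₀+2] '' Icc u v = Icc t e := by
        rw [show M₀+2 = (M₀+1)+1 from rfl, Function.iterate_succ, Set.image_comp, himg, hiter]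
      have huE : u ∈ Icc t e := ⟨htu, huv.trans hve⟩
      have hvE : v ∈ Icc t e := ⟨htu.trans huv, hve⟩
      rw [← hfull] at huE hvE
      obtain ⟨α, hα, hfα⟩ := huE
      obtain ⟨β, hβ, hfβ⟩ := hvE
      have hgc : ContinuousOn (fun x => f^[M₀+2] x - x) (Icc u v) :=
        ((hitcont _).mono hKab).sub continuousOn_id
      have hsub : uIcc α β ⊆ Icc u v := Set.ordConnected_Icc.uIcc_subset hα hβ
      have h0m : (0:ℝ) ∈ uIcc (f^[M₀+2] α - α) (f^[M₀+2] β - β) := by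
        rw [Set.mem_uIcc]
        left
        constructor
        · rw [hfα]; linarith [hα.1]
        · rw [hfβ]; linarith [hβ.2]
      obtain ⟨x, hx, hx0⟩ := intermediate_value_uIcc (hgc.mono hsub) h0m
      have hxK : x ∈ Icc u v := hsub hx
      have hper : f^[M₀+2] x = x := by
        have := sub_eq_zero.1 hx0
        linarith
      have hxJ₀ : x ∈ Icc t e := ⟨htu.trans hxK.1, hxK.2.trans hve⟩
      have hintx : ∀ i, 1 ≤ i → i ≤ M₀+1 → f^[i] x ∈ Icc e z₀ := by
        intro i hi1 hi2
        obtain ⟨i', rfl⟩ : ∃ i', i = i'+1 := ⟨i-1, by omega⟩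
        have hmem : f^[i'+1] x ∈ f^[i'+1] '' Icc u v := mem_image_of_mem _ hxK
        rw [Function.iterate_succ, Set.image_comp, himg] at hmem
        exact hint i' (by omega) hmem
      refine ⟨x, hKab hxK, hper, ?_⟩
      intro j hj0 hjM hfj
      have hxe : x = e := le_antisymm hxJ₀.2 (by
        have := (hintx j hj0 (by omega)).1
        rw [hfj] at this
        exact this)
      have hfx : f x ∈ Icc e z₀ := by
        have := hintx 1 le_rfl (by omega)
        simpa using this
      rw [hxe] at hfx
      linarith [hfx.1]

theorem stmt_12 (a b : ℝ) (hab : a ≤ b) (f : ℝ → ℝ)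
    (hf : ContinuousOn f (Set.Icc a b)) (hmaps : Set.MapsTo f (Set.Icc a b) (Set.Icc a b))
    (z : ℝ) (hz : z ∈ Set.Icc a b) (hfz : f z = z)
    (c : ℝ) (hc : c ∈ Set.Icc a b) (n : ℕ) (hn : 2 ≤ n)
    (h : (f c < c ∧ c < z ∧ z ≤ f^[n] c) ∨ (f^[n] c ≤ z ∧ z < c ∧ c < f c)) :
    TurbulentOn f (Set.Icc a b) ∧
      ∀ m : ℕ, 1 ≤ m → ∃ y ∈ Set.Icc a b, PeriodicPtOfPeriod f m y := by
  rcases h with ⟨h1, h2, h3⟩ | ⟨h1, h2, h3⟩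
  · exact main_case a b hab f hf hmaps z hz hfz c hc n h1 h2 h3
  · set g : ℝ → ℝ := fun x => -f (-x) with hg
    have hnegmaps : MapsTo (fun x : ℝ => -x) (Icc (-b) (-a)) (Icc a b) := by
      intro x hx
      simp only [Set.mem_Icc] at hx ⊢
      exact ⟨by linarith [hx.2], by linarith [hx.1]⟩
    have hgc : ContinuousOn g (Icc (-b) (-a)) :=
      (hf.comp continuous_neg.continuousOn hnegmaps).neg
    have hgm : MapsTo g (Icc (-b) (-a)) (Icc (-b) (-a)) := by
      intro x hx
      have h' := hmaps (hnegmaps hx)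
      simp only [Set.mem_Icc, hg] at h' ⊢
      exact ⟨by linarith [h'.2], by linarith [h'.1]⟩
    have hconj : ∀ k x, g^[k] (-x) = -(f^[k] x) := by
      intro k
      induction k with
      | zero => intro x; simp
      | succ k ih =>
        intro x
        rw [Function.iterate_succ_apply, Function.iterate_succ_apply]
        have hgx : g (-x) = -(f x) := by simp [hg]
        rw [hgx, ih (f x)]
    obtain ⟨htur, hper⟩ := main_case (-b) (-a) (by linarith) g hgc hgm (-z)
      ⟨by linarith [hz.2], by linarith [hz.1]⟩ (by simp [hg, hfz]) (-c)
      ⟨by linarith [hc.2], by linarith [hc.1]⟩ n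
      (by simp only [hg, neg_neg]; linarith) (by linarith)
      (by rw [hconj n c]; linarith)
    constructor
    · obtain ⟨J₀, J₁, ⟨hJ₀I, p₀, q₀, hpq₀, hJ₀⟩, ⟨hJ₁I, p₁, q₁, hpq₁, hJ₁⟩, hsing, hcov⟩ := htur
      have negIcc : ∀ p q : ℝ, (fun x : ℝ => -x) '' Icc p q = Icc (-q) (-p) := by
        intro p q
        ext x
        simp only [Set.mem_image, Set.mem_Icc]
        constructor
        · rintro ⟨y, ⟨h1', h2'⟩, rfl⟩
          exact ⟨by linarith, by linarith⟩
        · rintro ⟨h1', h2'⟩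
          exact ⟨-x, ⟨by linarith, by linarith⟩, by ring⟩
      refine ⟨(fun x : ℝ => -x) '' J₀, (fun x : ℝ => -x) '' J₁,
        ⟨?_, -q₀, -p₀, by linarith, by rw [hJ₀, negIcc]⟩,
        ⟨?_, -q₁, -p₁, by linarith, by rw [hJ₁, negIcc]⟩, ?_, ?_⟩
      · rintro x ⟨y, hy, rfl⟩
        have := hJ₀I hy
        simp only [Set.mem_Icc] at this ⊢
        exact ⟨by linarith [this.2], by linarith [this.1]⟩
      · rintro x ⟨y, hy, rfl⟩
        have := hJ₁I hy
        simp only [Set.mem_Icc] at this ⊢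
        exact ⟨by linarith [this.2], by linarith [this.1]⟩
      · rw [← Set.image_inter neg_injective]
        exact hsing.image _
      · rintro x (⟨y, hy, rfl⟩ | ⟨y, hy, rfl⟩)
        · obtain ⟨⟨w0, hw0, hgw0⟩, ⟨w1, hw1, hgw1⟩⟩ := hcov (Or.inl hy)
          constructor
          · refine ⟨-w0, Set.mem_image_of_mem _ hw0, ?_⟩
            have h'' : -f (-w0) = y := hgw0
            show f (-w0) = -y
            linarith
          · refine ⟨-w1, Set.mem_image_of_mem _ hw1, ?_⟩
            have h'' : -f (-w1) = y := hgw1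
            show f (-w1) = -y
            linarith
        · obtain ⟨⟨w0, hw0, hgw0⟩, ⟨w1, hw1, hgw1⟩⟩ := hcov (Or.inr hy)
          constructor
          · refine ⟨-w0, Set.mem_image_of_mem _ hw0, ?_⟩
            have h'' : -f (-w0) = y := hgw0
            show f (-w0) = -y
            linarith
          · refine ⟨-w1, Set.mem_image_of_mem _ hw1, ?_⟩
            have h'' : -f (-w1) = y := hgw1
            show f (-w1) = -y
            linarith
    · intro M hM
      obtain ⟨y, hy, hy1, hy2⟩ := hper M hM
      have hkey : ∀ j : ℕ, g^[j] y = -(f^[j] (-y)) := by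
        intro j
        have := hconj j (-y)
        rw [neg_neg] at this
        exact this
      refine ⟨-y, ⟨by linarith [hy.2], by linarith [hy.1]⟩, ?_, ?_⟩
      · have := hkey M
        rw [hy1] at this
        linarith
      · intro j hj0 hjM hcontra
        apply hy2 j hj0 hjM
        have := hkey j
        rw [hcontra, neg_neg] at this
        exact this
end

section
/- Let I be a compact interval in ℝ and f : I → I a continuous map. Suppose there exist points d < z₀ in I such that f²(d) = z₀, f²(z₀) = z₀, f²(x) < z₀ for all x with d < x < z₀, and there exists u₁ with d ≤ u₁ ≤ z₀ such that f²(u₁) = d and u₁ = min{x ∈ [d, z₀] : f²(x) = d}. Then f² is turbulent on [d, z₀]; indeed f²([d, u₁]) ∩ f²([u₁, z₀]) ⊇ [d, z₀] = [d, u₁] ∪ [u₁, z₀]. -/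
open Filter Set Function

theorem stmt_17 (a b : ℝ) (hab : a ≤ b) (f : ℝ → ℝ)
    (hf : ContinuousOn f (Set.Icc a b)) (hmaps : Set.MapsTo f (Set.Icc a b) (Set.Icc a b))
    (d z₀ u₁ : ℝ) (hd : d ∈ Set.Icc a b) (hz₀ : z₀ ∈ Set.Icc a b) (hdz₀ : d < z₀)
    (hfd : f^[2] d = z₀) (hfz₀ : f^[2] z₀ = z₀)
    (hbetween : ∀ x : ℝ, d < x → x < z₀ → f^[2] x < z₀)
    (hu₁ : u₁ ∈ Set.Icc d z₀) (hfu₁ : f^[2] u₁ = d)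
    (hmin : IsLeast {x : ℝ | x ∈ Set.Icc d z₀ ∧ f^[2] x = d} u₁) :
    TurbulentOn (f^[2]) (Set.Icc d z₀) ∧
      Set.Icc d z₀ ⊆ f^[2] '' Set.Icc d u₁ ∩ f^[2] '' Set.Icc u₁ z₀ ∧
      Set.Icc d z₀ = Set.Icc d u₁ ∪ Set.Icc u₁ z₀ := by
  obtain ⟨hdu, huz⟩ := hu₁
  have hg : ContinuousOn (f^[2]) (Set.Icc a b) := by
    have : f^[2] = f ∘ f := by
      funext x; simp [Function.iterate_succ', Function.comp]
    rw [this]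
    exact hf.comp hf hmaps
  have hsub1 : Set.Icc d u₁ ⊆ Set.Icc a b :=
    Set.Icc_subset_Icc hd.1 (le_trans huz hz₀.2)
  have hsub2 : Set.Icc u₁ z₀ ⊆ Set.Icc a b :=
    Set.Icc_subset_Icc (le_trans hd.1 hdu) hz₀.2
  have him1 : Set.Icc d z₀ ⊆ f^[2] '' Set.Icc d u₁ := by
    have := intermediate_value_Icc' hdu (hg.mono hsub1)
    rwa [hfd, hfu₁] at this
  have him2 : Set.Icc d z₀ ⊆ f^[2] '' Set.Icc u₁ z₀ := by
    have := intermediate_value_Icc huz (hg.mono hsub2)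
    rwa [hfz₀, hfu₁] at this
  have hunion : Set.Icc d z₀ = Set.Icc d u₁ ∪ Set.Icc u₁ z₀ :=
    (Set.Icc_union_Icc_eq_Icc hdu huz).symm
  refine ⟨⟨Set.Icc d u₁, Set.Icc u₁ z₀,
    ⟨Set.Icc_subset_Icc le_rfl huz, d, u₁, hdu, rfl⟩,
    ⟨Set.Icc_subset_Icc hdu le_rfl, u₁, z₀, huz, rfl⟩,
    ?_, ?_⟩, fun x hx => ⟨him1 hx, him2 hx⟩, hunion⟩
  · intro x hx y hy
    have hx1 : x = u₁ := le_antisymm hx.1.2 hx.2.1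
    have hy1 : y = u₁ := le_antisymm hy.1.2 hy.2.1
    rw [hx1, hy1]
  · rw [← hunion]
    exact fun x hx => ⟨him1 hx, him2 hx⟩
end
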